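/- For any array A of distinct elements, the number of inversions kinv is at most the total displacement ksum, and ksum is at most 2·kinv. -/

import Mathlib

/-- `rank A i` is the number of elements of the array `A` that are smaller than `A i`. -/
def rank {n : ℕ} (A : Fin n → ℤ) (i : Fin n) : ℕ :=
  (Finset.univ.filter (fun j => A j < A i)).card

/-- The total displacement of the array `A`. -/
def ksum {n : ℕ} (A : Fin n → ℤ) : ℕ :=
  ∑ i : Fin n, ((i : ℤ) - rank A i).natAbs

/-- The number of inversions of the array `A`. -/
def kinv {n : ℕ} (A : Fin n → ℤ) : ℕ :=
  ((Finset.univ ×ˢ Finset.univ).filter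
    (fun p : Fin n × Fin n => p.1 < p.2 ∧ A p.2 < A p.1)).card

open Finset

namespace DG

variable {n : ℕ}

def Invv (A : Fin n → ℤ) : Finset (Fin n × Fin n) :=
  (univ ×ˢ univ).filter (fun p => p.1 < p.2 ∧ A p.2 < A p.1)

lemma kinv_def (A : Fin n → ℤ) : kinv A = (Invv A).card := rfl

lemma mem_Invv {A : Fin n → ℤ} {e : Fin n × Fin n} :
    e ∈ Invv A ↔ e.1 < e.2 ∧ A e.2 < A e.1 := by simp [Invv]

lemma rank_lt_rank (A : Fin n → ℤ) {p q : Fin n} (h : A p < A q) :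
    rank A p < rank A q := by
  apply Finset.card_lt_card
  rw [Finset.ssubset_iff_of_subset (Finset.monotone_filter_right _ (fun x _ hx => lt_trans hx h))]
  exact ⟨p, by simp [h], by simp⟩

lemma rank_lt (A : Fin n → ℤ) (i : Fin n) : rank A i < n := by
  have h1 : (univ.filter (fun j => A j < A i)) ⊆ univ.erase i := by
    intro x hx
    simp only [mem_filter, mem_univ, true_and] at hx
    exact mem_erase.mpr ⟨fun h => by rw [h] at hx; exact lt_irrefl _ hx, mem_univ x⟩
  calc rank A i ≤ (univ.erase i).card := Finset.card_le_card h1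
    _ = n - 1 := by rw [Finset.card_erase_of_mem (mem_univ i)]; simp
    _ < n := Nat.sub_lt i.pos one_pos

lemma rank_injective {A : Fin n → ℤ} (hinj : Function.Injective A) :
    Function.Injective (fun i => rank A i) := by
  intro p q h
  by_contra hne
  rcases (hinj.ne_iff.mpr hne).lt_or_gt with h' | h'
  · exact absurd h (Nat.ne_of_lt (rank_lt_rank A h'))
  · exact absurd h (Nat.ne_of_gt (rank_lt_rank A h'))

lemma lt_of_rank_lt {A : Fin n → ℤ} (hinj : Function.Injective A) {p q : Fin n}
    (h : rank A p < rank A q) : A p < A q := by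
  rcases lt_trichotomy (A p) (A q) with h' | h' | h'
  · exact h'
  · exact absurd (hinj h') (by rintro rfl; exact lt_irrefl _ h)
  · exact absurd h (not_lt_of_gt (rank_lt_rank A h'))

lemma rank_surjective {A : Fin n → ℤ} (hinj : Function.Injective A) (v : Fin n) :
    ∃ j, rank A j = (v : ℕ) := by
  have hbij : Function.Bijective (fun i : Fin n => (⟨rank A i, rank_lt A i⟩ : Fin n)) := by
    rw [Fintype.bijective_iff_injective_and_card]
    exact ⟨fun p q h => rank_injective hinj (by simpa [Fin.mk.injEq] using h), rfl⟩
  obtain ⟨j, hj⟩ := hbij.2 v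
  exact ⟨j, by simpa [Fin.ext_iff] using hj⟩

lemma rank_comp_equiv (A : Fin n → ℤ) (e : Equiv.Perm (Fin n)) (k : Fin n) :
    rank (A ∘ e) k = rank A (e k) := by
  unfold rank
  apply Finset.card_equiv e
  intro l
  simp

lemma kinv_eq_sum_a (A : Fin n → ℤ) :
    (Invv A).card = ∑ k : Fin n, (univ.filter (fun p => p < k ∧ A k < A p)).card := by
  rw [Finset.card_eq_sum_card_fiberwise (f := Prod.snd) (t := univ) (fun x _ => mem_univ _)]
  refine Finset.sum_congr rfl (fun k _ => ?_)
  apply Finset.card_nbij' (fun e => e.1) (fun p => (p, k))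
  · intro e he
    simp only [mem_coe, Invv, mem_filter, mem_product] at he
    simp only [mem_coe, mem_filter, mem_univ, true_and]
    obtain ⟨⟨-, h1, h2⟩, h3⟩ := he
    rw [h3] at h1 h2
    exact ⟨h1, h2⟩
  · intro p hp
    simp only [mem_coe, mem_filter, mem_univ, true_and] at hp
    simp only [mem_coe, Invv, mem_filter, mem_product]
    exact ⟨⟨⟨mem_univ _, mem_univ _⟩, hp.1, hp.2⟩, trivial⟩
  · intro e he
    simp only [mem_coe, Invv, mem_filter, mem_product] at he
    exact Prod.ext rfl he.2.symm
  · intro p _; rfl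

lemma kinv_eq_sum_b (A : Fin n → ℤ) :
    (Invv A).card = ∑ k : Fin n, (univ.filter (fun q => k < q ∧ A q < A k)).card := by
  rw [Finset.card_eq_sum_card_fiberwise (f := Prod.fst) (t := univ) (fun x _ => mem_univ _)]
  refine Finset.sum_congr rfl (fun k _ => ?_)
  apply Finset.card_nbij' (fun e => e.2) (fun q => (k, q))
  · intro e he
    simp only [mem_coe, Invv, mem_filter, mem_product] at he
    simp only [mem_coe, mem_filter, mem_univ, true_and]
    obtain ⟨⟨-, h1, h2⟩, h3⟩ := he
    rw [h3] at h1 h2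
    exact ⟨h1, h2⟩
  · intro q hq
    simp only [mem_coe, mem_filter, mem_univ, true_and] at hq
    simp only [mem_coe, Invv, mem_filter, mem_product]
    exact ⟨⟨⟨mem_univ _, mem_univ _⟩, hq.1, hq.2⟩, trivial⟩
  · intro e he
    simp only [mem_coe, Invv, mem_filter, mem_product] at he
    exact Prod.ext he.2.symm rfl
  · intro q _; rfl

lemma ksum_le_two_kinv' (A : Fin n → ℤ) (hinj : Function.Injective A) :
    ksum A ≤ 2 * (Invv A).card := by
  have key : ∀ k : Fin n, ((k : ℤ) - rank A k).natAbs ≤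
      (univ.filter (fun p => p < k ∧ A k < A p)).card +
      (univ.filter (fun q => k < q ∧ A q < A k)).card := by
    intro k
    have hval : (k : ℕ) = (univ.filter (fun p => p < k ∧ A p < A k)).card +
        (univ.filter (fun p => p < k ∧ A k < A p)).card := by
      have h0 : (univ.filter (fun p => p < k)).card = (k : ℕ) := by
        have : univ.filter (fun p => p < k) = Finset.Iio k := by
          ext x; simp
        rw [this, Fin.card_Iio]
      rw [← h0, ← Finset.card_union_of_disjoint]
      · congr 1
        ext x
        simp only [mem_union, mem_filter, mem_univ, true_and]
        constructor
        · rintro hx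
          rcases lt_trichotomy (A x) (A k) with h | h | h
          · exact Or.inl ⟨hx, h⟩
          · exact absurd (hinj h) (Fin.ne_of_lt hx)
          · exact Or.inr ⟨hx, h⟩
        · rintro (⟨hx, -⟩ | ⟨hx, -⟩) <;> exact hx
      · rw [Finset.disjoint_left]
        rintro x hx hx'
        simp only [mem_filter] at hx hx'
        exact lt_irrefl _ (lt_trans hx.2.2 hx'.2.2)
    have hrank : rank A k = (univ.filter (fun p => p < k ∧ A p < A k)).card +
        (univ.filter (fun q => k < q ∧ A q < A k)).card := by
      unfold rank
      rw [← Finset.card_union_of_disjoint]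
      · congr 1
        ext x
        simp only [mem_union, mem_filter, mem_univ, true_and]
        constructor
        · rintro hx
          rcases lt_trichotomy x k with h | h | h
          · exact Or.inl ⟨h, hx⟩
          · rw [h] at hx; exact absurd hx (lt_irrefl _)
          · exact Or.inr ⟨h, hx⟩
        · rintro (⟨-, hx⟩ | ⟨-, hx⟩) <;> exact hx
      · rw [Finset.disjoint_left]
        rintro x hx hx'
        simp only [mem_filter] at hx hx'
        exact lt_irrefl _ (lt_trans hx.2.1 hx'.2.1)
    rw [hrank]
    omega
  calc ksum A ≤ ∑ k : Fin n, ((univ.filter (fun p => p < k ∧ A k < A p)).card +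
      (univ.filter (fun q => k < q ∧ A q < A k)).card) := Finset.sum_le_sum (fun k _ => key k)
    _ = 2 * (Invv A).card := by
      rw [Finset.sum_add_distrib, ← kinv_eq_sum_a, ← kinv_eq_sum_b]
      ring

def Fset (i j : Fin n) : Finset (Fin n × Fin n) :=
  (Finset.Ioc i j).image (fun q => (i, q)) ∪ (Finset.Ioo i j).image (fun p => (p, j))

lemma mem_Fset {i j : Fin n} {e : Fin n × Fin n} :
    e ∈ Fset i j ↔ (e.1 = i ∧ i < e.2 ∧ e.2 ≤ j) ∨ (e.2 = j ∧ i < e.1 ∧ e.1 < j) := by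
  rcases e with ⟨a, b⟩
  simp only [Fset, mem_union, mem_image, Finset.mem_Ioc, Finset.mem_Ioo, Prod.mk.injEq]
  constructor
  · rintro (⟨q, hq, rfl, rfl⟩ | ⟨p, hp, rfl, rfl⟩)
    · exact Or.inl ⟨rfl, hq⟩
    · exact Or.inr ⟨rfl, hp⟩
  · rintro (⟨rfl, h⟩ | ⟨rfl, h⟩)
    · exact Or.inl ⟨b, h, rfl, rfl⟩
    · exact Or.inr ⟨a, h, rfl, rfl⟩

lemma card_Fset {i j : Fin n} (hij : i < j) :
    (Fset i j).card = ((j:ℕ) - i) + ((j:ℕ) - i - 1) := by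
  unfold Fset
  rw [Finset.card_union_of_disjoint]
  · rw [Finset.card_image_of_injective _ (fun a b h => by simpa using h),
      Finset.card_image_of_injective _ (fun a b h => by simpa using h),
      Fin.card_Ioc, Fin.card_Ioo]
  · rw [Finset.disjoint_left]
    rintro e he he'
    simp only [mem_image, Finset.mem_Ioc, Finset.mem_Ioo] at he he'
    obtain ⟨q, _, rfl⟩ := he
    obtain ⟨p, hp, hpe⟩ := he'
    rw [Prod.mk.injEq] at hpe
    exact absurd hpe.1 (ne_of_gt hp.1)

lemma LA (A : Fin n → ℤ) {i j : Fin n} (hij : i < j) :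
    (Invv A \ Fset i j).card ≤ (Invv (A ∘ Equiv.swap i j) \ Fset i j).card := by
  set s : Equiv.Perm (Fin n) := Equiv.swap i j with hs
  apply Finset.card_le_card_of_injOn (fun e => (s e.1, s e.2))
  · rintro ⟨p, q⟩ he
    rw [mem_coe, mem_sdiff] at he ⊢
    obtain ⟨hinv, hF⟩ := he
    rw [mem_Invv] at hinv
    obtain ⟨hpq, hA⟩ := hinv
    dsimp only at hpq hA ⊢
    have hAv : (A ∘ s) (s q) < (A ∘ s) (s p) := by
      simpa [hs] using hA
    have hij' : i ≠ j := ne_of_lt hij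
    have main : s p < s q ∧ ((s p, s q) : Fin n × Fin n) ∉ Fset i j := by
      rcases eq_or_ne p i with h1 | h1
      · have h2j : j < q := by
          by_contra hle
          exact hF (mem_Fset.mpr (Or.inl ⟨h1, h1 ▸ hpq, not_lt.mp hle⟩))
        have h2 : s q = q := Equiv.swap_apply_of_ne_of_ne (ne_of_gt (hij.trans h2j)) (ne_of_gt h2j)
        rw [h1, show s i = j from Equiv.swap_apply_left i j, h2]
        refine ⟨h2j, fun hmem => ?_⟩
        rcases mem_Fset.mp hmem with ⟨hc, -⟩ | ⟨hc, -⟩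
        · exact hij' hc.symm
        · exact absurd hc (ne_of_gt h2j)
      rcases eq_or_ne p j with h1j | h1j
      · have h2j : j < q := h1j ▸ hpq
        have h2 : s q = q := Equiv.swap_apply_of_ne_of_ne (ne_of_gt (hij.trans h2j)) (ne_of_gt h2j)
        rw [h1j, show s j = i from Equiv.swap_apply_right i j, h2]
        refine ⟨hij.trans h2j, fun hmem => ?_⟩
        rcases mem_Fset.mp hmem with ⟨-, -, hc⟩ | ⟨hc, -⟩
        · exact absurd hc (not_le.mpr h2j)
        · exact absurd hc (ne_of_gt h2j)
      have h1' : s p = p := Equiv.swap_apply_of_ne_of_ne h1 h1j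
      rcases eq_or_ne q i with h2i | h2i
      · have hp : p < i := h2i ▸ hpq
        rw [h2i, show s i = j from Equiv.swap_apply_left i j, h1']
        refine ⟨hp.trans hij, fun hmem => ?_⟩
        rcases mem_Fset.mp hmem with ⟨hc, -⟩ | ⟨-, hc, -⟩
        · exact h1 hc
        · exact absurd hc (not_lt.mpr hp.le)
      rcases eq_or_ne q j with h2j | h2j
      · have hpj : p < j := h2j ▸ hpq
        have hpi : p < i := by
          rcases lt_or_ge p i with h | h
          · exact h
          · exact absurd (mem_Fset.mpr (Or.inr ⟨h2j, lt_of_le_of_ne h (Ne.symm h1), hpj⟩)) hF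
        rw [h2j, show s j = i from Equiv.swap_apply_right i j, h1']
        refine ⟨hpi, fun hmem => ?_⟩
        rcases mem_Fset.mp hmem with ⟨hc, -⟩ | ⟨hc, -⟩
        · exact h1 hc
        · exact hij' hc
      · have h2' : s q = q := Equiv.swap_apply_of_ne_of_ne h2i h2j
        rw [h1', h2']
        exact ⟨hpq, fun hmem => hF hmem⟩
    exact ⟨mem_Invv.mpr ⟨main.1, hAv⟩, main.2⟩
  · intro e _ e' _ h
    simp only [Prod.mk.injEq] at h
    exact Prod.ext_iff.mpr ⟨(Equiv.swap i j).injective h.1, (Equiv.swap i j).injective h.2⟩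

lemma LB (A : Fin n → ℤ) (hinj : Function.Injective A) {i j : Fin n} (hij : i < j) :
    (Fset i j ∩ Invv (A ∘ Equiv.swap i j)).card = (Fset i j \ Invv A).card := by
  have hij' : i ≠ j := ne_of_lt hij
  set s : Equiv.Perm (Fin n) := Equiv.swap i j with hs
  set Φ : Fin n × Fin n → Fin n × Fin n :=
    fun e => (min (s e.1) (s e.2), max (s e.1) (s e.2)) with hΦ
  have hsi : s i = j := Equiv.swap_apply_left i j
  have hsj : s j = i := Equiv.swap_apply_right i j
  have c1 : ∀ q : Fin n, i < q → q < j → Φ (i, q) = (q, j) := by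
    intro q h1 h2
    have hq : s q = q := Equiv.swap_apply_of_ne_of_ne (ne_of_gt h1) (ne_of_lt h2)
    show (min (s i) (s q), max (s i) (s q)) = (q, j)
    rw [hsi, hq, min_eq_right h2.le, max_eq_left h2.le]
  have c2 : Φ (i, j) = (i, j) := by
    show (min (s i) (s j), max (s i) (s j)) = (i, j)
    rw [hsi, hsj, min_eq_right hij.le, max_eq_left hij.le]
  have c3 : ∀ p : Fin n, i < p → p < j → Φ (p, j) = (i, p) := by
    intro p h1 h2
    have hp : s p = p := Equiv.swap_apply_of_ne_of_ne (ne_of_gt h1) (ne_of_lt h2)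
    show (min (s p) (s j), max (s p) (s j)) = (i, p)
    rw [hsj, hp, min_eq_right h1.le, max_eq_left h1.le]
  have hcases : ∀ e ∈ Fset i j, (e = ((i, j) : Fin n × Fin n)) ∨
      (∃ q, i < q ∧ q < j ∧ e = (i, q)) ∨ (∃ p, i < p ∧ p < j ∧ e = (p, j)) := by
    intro e he
    rcases mem_Fset.mp he with ⟨h1, h2, h3⟩ | ⟨h1, h2, h3⟩
    · rcases eq_or_lt_of_le h3 with h4 | h4
      · exact Or.inl (Prod.ext_iff.mpr ⟨h1, h4⟩)
      · exact Or.inr (Or.inl ⟨e.2, h2, h4, Prod.ext_iff.mpr ⟨h1, rfl⟩⟩)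
    · exact Or.inr (Or.inr ⟨e.1, h2, h3, Prod.ext_iff.mpr ⟨rfl, h1⟩⟩)
  have vA' : ∀ x, (A ∘ s) x = A (s x) := fun _ => rfl
  apply Finset.card_nbij' Φ Φ
  · -- F ∩ InvA'  →  F \ InvA
    intro e he
    rw [mem_coe] at he ⊢
    rw [mem_inter] at he
    obtain ⟨heF, heI⟩ := he
    rcases hcases e heF with rfl | ⟨q, h1, h2, rfl⟩ | ⟨p, h1, h2, rfl⟩
    · rw [c2]
      refine mem_sdiff.mpr ⟨heF, fun hmem => ?_⟩
      have ha := (mem_Invv.mp heI).2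
      rw [vA', vA', hsi, hsj] at ha
      exact lt_asymm ha (mem_Invv.mp hmem).2
    · rw [c1 q h1 h2]
      refine mem_sdiff.mpr ⟨mem_Fset.mpr (Or.inr ⟨rfl, h1, h2⟩), fun hmem => ?_⟩
      have ha := (mem_Invv.mp heI).2
      have hq : s q = q := Equiv.swap_apply_of_ne_of_ne (ne_of_gt h1) (ne_of_lt h2)
      rw [vA', vA', hsi, hq] at ha
      exact lt_asymm ha (mem_Invv.mp hmem).2
    · rw [c3 p h1 h2]
      refine mem_sdiff.mpr ⟨mem_Fset.mpr (Or.inl ⟨rfl, h1, h2.le⟩), fun hmem => ?_⟩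
      have ha := (mem_Invv.mp heI).2
      have hp : s p = p := Equiv.swap_apply_of_ne_of_ne (ne_of_gt h1) (ne_of_lt h2)
      rw [vA', vA', hsj, hp] at ha
      exact lt_asymm ha (mem_Invv.mp hmem).2
  · -- F \ InvA  →  F ∩ InvA'
    intro e he
    rw [mem_coe] at he ⊢
    rw [mem_sdiff] at he
    obtain ⟨heF, heNI⟩ := he
    rcases hcases e heF with rfl | ⟨q, h1, h2, rfl⟩ | ⟨p, h1, h2, rfl⟩
    · rw [c2]
      refine mem_inter.mpr ⟨heF, mem_Invv.mpr ⟨hij, ?_⟩⟩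
      have hle : A i ≤ A j := not_lt.mp (fun h => heNI (mem_Invv.mpr ⟨hij, h⟩))
      have hne : A i ≠ A j := fun h => hij' (hinj h)
      show A (s j) < A (s i)
      rw [hsi, hsj]
      exact lt_of_le_of_ne hle hne
    · rw [c1 q h1 h2]
      refine mem_inter.mpr ⟨mem_Fset.mpr (Or.inr ⟨rfl, h1, h2⟩), mem_Invv.mpr ⟨h2, ?_⟩⟩
      have hle : A i ≤ A q := not_lt.mp (fun h => heNI (mem_Invv.mpr ⟨h1, h⟩))
      have hne : A i ≠ A q := fun h => (ne_of_lt h1) (hinj h)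
      have hq : s q = q := Equiv.swap_apply_of_ne_of_ne (ne_of_gt h1) (ne_of_lt h2)
      show A (s j) < A (s q)
      rw [hsj, hq]
      exact lt_of_le_of_ne hle hne
    · rw [c3 p h1 h2]
      refine mem_inter.mpr ⟨mem_Fset.mpr (Or.inl ⟨rfl, h1, h2.le⟩), mem_Invv.mpr ⟨h1, ?_⟩⟩
      have hle : A p ≤ A j := not_lt.mp (fun h => heNI (mem_Invv.mpr ⟨h2, h⟩))
      have hne : A p ≠ A j := fun h => (ne_of_lt h2) (hinj h)
      have hp : s p = p := Equiv.swap_apply_of_ne_of_ne (ne_of_gt h1) (ne_of_lt h2)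
      show A (s p) < A (s i)
      rw [hsi, hp]
      exact lt_of_le_of_ne hle hne
  · intro e he
    rcases hcases e (mem_inter.mp (mem_coe.mp he)).1 with rfl | ⟨q, h1, h2, rfl⟩ | ⟨p, h1, h2, rfl⟩
    · rw [c2, c2]
    · rw [c1 q h1 h2, c3 q h1 h2]
    · rw [c3 p h1 h2, c1 p h1 h2]
  · intro e he
    rcases hcases e (mem_sdiff.mp (mem_coe.mp he)).1 with rfl | ⟨q, h1, h2, rfl⟩ | ⟨p, h1, h2, rfl⟩
    · rw [c2, c2]
    · rw [c1 q h1 h2, c3 q h1 h2]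
    · rw [c3 p h1 h2, c1 p h1 h2]

lemma F2_bound (A : Fin n → ℤ) {i j : Fin n} (hij : i < j) :
    ((Finset.Ioo i j).image (fun p => ((p, j) : Fin n × Fin n)) ∩ Invv A).card
      ≤ (j:ℕ) - i - 1 := by
  calc _ ≤ ((Finset.Ioo i j).image (fun p => ((p, j) : Fin n × Fin n))).card :=
        Finset.card_le_card Finset.inter_subset_left
    _ ≤ (Finset.Ioo i j).card := Finset.card_image_le
    _ = (j:ℕ) - i - 1 := Fin.card_Ioo i j

lemma F1_bound_j (A : Fin n → ℤ) {i j : Fin n} (hij : i < j) :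
    ((Finset.Ioc i j).image (fun q => ((i, q) : Fin n × Fin n)) ∩ Invv A).card
      ≤ (j:ℕ) - i := by
  calc _ ≤ ((Finset.Ioc i j).image (fun q => ((i, q) : Fin n × Fin n))).card :=
        Finset.card_le_card Finset.inter_subset_left
    _ ≤ (Finset.Ioc i j).card := Finset.card_image_le
    _ = (j:ℕ) - i := Fin.card_Ioc i j

lemma F1_bound_u (A : Fin n → ℤ) (hinj : Function.Injective A) {i j : Fin n} (hij : i < j)
    (hlow : ∀ q : Fin n, rank A q < (i:ℕ) → q < i) :
    ((Finset.Ioc i j).image (fun q => ((i, q) : Fin n × Fin n)) ∩ Invv A).card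
      ≤ rank A i - i := by
  have h := Finset.card_le_card_of_injOn (fun e : Fin n × Fin n => rank A e.2)
    (s := (Finset.Ioc i j).image (fun q => ((i, q) : Fin n × Fin n)) ∩ Invv A)
    (t := Finset.Ico (i : ℕ) (rank A i)) ?_ ?_
  · calc _ ≤ (Finset.Ico (i : ℕ) (rank A i)).card := h
      _ = rank A i - i := Nat.card_Ico _ _
  · intro e he
    rw [mem_coe, mem_inter] at he
    obtain ⟨heF, heI⟩ := he
    simp only [mem_image, Finset.mem_Ioc] at heF
    obtain ⟨q, hq, rfl⟩ := heF
    have hA := (mem_Invv.mp heI).2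
    simp only [mem_coe, Finset.mem_Ico]
    constructor
    · by_contra hcon
      exact absurd (hlow q (not_le.mp hcon)) (not_lt.mpr hq.1.le)
    · exact rank_lt_rank A hA
  · intro e he e' he' hr
    simp only [coe_inter, Set.mem_inter_iff, mem_coe, mem_image] at he he'
    obtain ⟨⟨q, _, rfl⟩, -⟩ := he
    obtain ⟨⟨q', _, rfl⟩, -⟩ := he'
    have := rank_injective hinj hr
    simp only at this
    rw [this]

lemma ksum_step (A : Fin n → ℤ) {i j : Fin n} (hij : i < j)
    (hranki : (i:ℕ) < rank A i) (hrankj : rank A j = (i:ℕ)) :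
    ksum (A ∘ Equiv.swap i j) + 2 * min ((j:ℕ) - i) (rank A i - i) ≤ ksum A := by
  set s : Equiv.Perm (Fin n) := Equiv.swap i j with hs
  have hne : i ≠ j := ne_of_lt hij
  have e1 : ksum (A ∘ s) = ∑ k : Fin n, (((s k : Fin n) : ℤ) - rank A k).natAbs := by
    unfold ksum
    rw [← Equiv.sum_comp s (fun k : Fin n => (((s k : Fin n) : ℤ) - rank A k).natAbs)]
    refine Finset.sum_congr rfl (fun k _ => ?_)
    rw [rank_comp_equiv, Equiv.swap_apply_self]
  rw [e1]
  unfold ksum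
  have hju : j ∈ univ.erase i := mem_erase.mpr ⟨hne.symm, mem_univ j⟩
  have split : ∀ f : Fin n → ℕ, ∑ k : Fin n, f k = f i + (f j + ∑ k ∈ (univ.erase i).erase j, f k) := by
    intro f
    rw [Finset.add_sum_erase _ f hju, Finset.add_sum_erase _ f (mem_univ i)]
  rw [split, split]
  have hrest : ∑ k ∈ (univ.erase i).erase j, (((s k : Fin n) : ℤ) - rank A k).natAbs
      = ∑ k ∈ (univ.erase i).erase j, ((k : ℤ) - rank A k).natAbs := by
    refine Finset.sum_congr rfl (fun k hk => ?_)
    rw [mem_erase, mem_erase] at hk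
    rw [show s k = k from Equiv.swap_apply_of_ne_of_ne hk.2.1 hk.1]
  rw [hrest]
  have hsi : s i = j := Equiv.swap_apply_left i j
  have hsj : s j = i := Equiv.swap_apply_right i j
  rw [hsi, hsj, hrankj]
  have hijv : (i : ℕ) < (j : ℕ) := hij
  have h1 : ((j : Fin n) : ℤ) = ((j : ℕ) : ℤ) := rfl
  omega


lemma kinv_step (A : Fin n → ℤ) (hinj : Function.Injective A) {i j : Fin n}
    (hij : i < j) (hranki : (i:ℕ) < rank A i)
    (hlow : ∀ q : Fin n, rank A q < (i:ℕ) → q < i) :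
    kinv A + 1 ≤ kinv (A ∘ Equiv.swap i j) + 2 * min ((j:ℕ) - i) (rank A i - i) := by
  set A' := A ∘ Equiv.swap i j with hA'
  set F := Fset i j with hF
  set I := Invv A with hI
  set I' := Invv A' with hI'
  have c1 : (I ∩ F).card + (I \ F).card = I.card := Finset.card_inter_add_card_sdiff I F
  have c2 : (I' ∩ F).card + (I' \ F).card = I'.card := Finset.card_inter_add_card_sdiff I' F
  have c3 : (F ∩ I).card + (F \ I).card = F.card := Finset.card_inter_add_card_sdiff F I
  have hLA : (I \ F).card ≤ (I' \ F).card := LA A hij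
  have hLB : (F ∩ I').card = (F \ I).card := LB A hinj hij
  have comm1 : (I ∩ F).card = (F ∩ I).card := by rw [Finset.inter_comm]
  have comm2 : (I' ∩ F).card = (F ∩ I').card := by rw [Finset.inter_comm]
  have hcF : F.card = ((j:ℕ) - i) + ((j:ℕ) - i - 1) := card_Fset hij
  have hsplit : (F ∩ I).card ≤
      ((Finset.Ioc i j).image (fun q => ((i, q) : Fin n × Fin n)) ∩ I).card +
      ((Finset.Ioo i j).image (fun p => ((p, j) : Fin n × Fin n)) ∩ I).card := by
    rw [hF]
    unfold Fset
    rw [Finset.union_inter_distrib_right]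
    exact Finset.card_union_le _ _
  have b1 : ((Finset.Ioc i j).image (fun q => ((i, q) : Fin n × Fin n)) ∩ I).card
      ≤ min ((j:ℕ) - i) (rank A i - i) :=
    le_min (F1_bound_j A hij) (F1_bound_u A hinj hij hlow)
  have b2 : ((Finset.Ioo i j).image (fun p => ((p, j) : Fin n × Fin n)) ∩ I).card
      ≤ (j:ℕ) - i - 1 := F2_bound A hij
  have hijv : (i : ℕ) < (j : ℕ) := hij
  rw [kinv_def, kinv_def, ← hI, ← hI']
  omega

lemma kinv_of_fixed (A : Fin n → ℤ) (hall : ∀ k : Fin n, rank A k = (k:ℕ)) :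
    kinv A = 0 := by
  rw [kinv_def, Finset.card_eq_zero, Finset.eq_empty_iff_forall_notMem]
  rintro ⟨p, q⟩ hm
  rw [mem_Invv] at hm
  obtain ⟨h1, h2⟩ := hm
  have h3 := rank_lt_rank A h2
  rw [hall p, hall q] at h3
  have h1' : (p:ℕ) < (q:ℕ) := h1
  omega

lemma kinv_le_ksum_aux : ∀ (m : ℕ) (A : Fin n → ℤ), Function.Injective A →
    (univ.filter (fun k : Fin n => rank A k ≠ (k : ℕ))).card ≤ m → kinv A ≤ ksum A := by
  intro m
  induction m with
  | zero =>
    intro A hinj hcard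
    have hempty := Finset.card_eq_zero.mp (Nat.le_zero.mp hcard)
    have hall : ∀ k : Fin n, rank A k = (k:ℕ) := by
      intro k
      by_contra hk
      exact Finset.eq_empty_iff_forall_notMem.mp hempty k (mem_filter.mpr ⟨mem_univ k, hk⟩)
    rw [kinv_of_fixed A hall]
    exact Nat.zero_le _
  | succ m ih =>
    intro A hinj hcard
    by_cases hne : (univ.filter (fun k : Fin n => rank A k ≠ (k : ℕ))).Nonempty
    · set S := univ.filter (fun k : Fin n => rank A k ≠ (k : ℕ)) with hS
      set i := S.min' hne with hi
      have hiS : i ∈ S := S.min'_mem hne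
      have hifix : rank A i ≠ (i:ℕ) := (mem_filter.mp hiS).2
      have hfix_lt : ∀ k : Fin n, k < i → rank A k = (k:ℕ) := by
        intro k hk
        by_contra hkk
        exact absurd (S.min'_le k (mem_filter.mpr ⟨mem_univ k, hkk⟩)) (not_le.mpr hk)
      have hlow : ∀ q : Fin n, rank A q < (i:ℕ) → q < i := by
        intro q hq
        by_contra hcon
        have hk_lt : (⟨rank A q, lt_trans hq i.isLt⟩ : Fin n) < i := hq
        have h1 : rank A (⟨rank A q, lt_trans hq i.isLt⟩ : Fin n) = rank A q :=
          hfix_lt _ hk_lt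
        have hkq : (⟨rank A q, lt_trans hq i.isLt⟩ : Fin n) = q := rank_injective hinj h1
        exact hcon (hkq ▸ hk_lt)
      have hranki : (i:ℕ) < rank A i := by
        rcases Nat.lt_trichotomy (rank A i) ((i:ℕ)) with h | h | h
        · exact absurd (hlow i h) (lt_irrefl i)
        · exact absurd h hifix
        · exact h
      obtain ⟨j, hj⟩ := rank_surjective hinj i
      have hij : i < j := by
        rcases Nat.lt_trichotomy ((j:ℕ)) ((i:ℕ)) with h | h | h
        · have h2 := hfix_lt j h
          omega
        · rw [Fin.ext h] at hj
          exact absurd hj hifix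
        · exact h
      set A' := A ∘ Equiv.swap i j with hA'
      have hinj' : Function.Injective A' := hinj.comp (Equiv.swap i j).injective
      have hjS : j ∈ S := by
        refine mem_filter.mpr ⟨mem_univ _, ?_⟩
        rw [hj]
        have : (i:ℕ) < (j:ℕ) := hij
        omega
      have hsub : (univ.filter (fun k : Fin n => rank A' k ≠ (k : ℕ))) ⊆ S.erase i := by
        intro k hk
        rw [mem_filter] at hk
        have hk2 := hk.2
        rw [hA', rank_comp_equiv] at hk2
        rcases eq_or_ne k i with rfl | hki
        · rw [Equiv.swap_apply_left] at hk2
          exact absurd hj hk2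
        rcases eq_or_ne k j with rfl | hkj
        · rw [Equiv.swap_apply_right] at hk2
          exact mem_erase.mpr ⟨hki, hjS⟩
        · rw [Equiv.swap_apply_of_ne_of_ne hki hkj] at hk2
          exact mem_erase.mpr ⟨hki, mem_filter.mpr ⟨mem_univ _, hk2⟩⟩
      have hcard' : (univ.filter (fun k : Fin n => rank A' k ≠ (k : ℕ))).card ≤ m := by
        have h1 : (S.erase i).card = S.card - 1 := Finset.card_erase_of_mem hiS
        have h2 := Finset.card_le_card hsub
        have hpos : 0 < S.card := Finset.card_pos.mpr hne
        omega
      have IH := ih A' hinj' hcard'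
      have k1 := kinv_step A hinj hij hranki hlow
      have k2 := ksum_step A hij hranki hj
      rw [← hA'] at k1 k2
      omega
    · rw [Finset.not_nonempty_iff_eq_empty] at hne
      have hall : ∀ k : Fin n, rank A k = (k:ℕ) := by
        intro k
        by_contra hk
        exact Finset.eq_empty_iff_forall_notMem.mp hne k (mem_filter.mpr ⟨mem_univ k, hk⟩)
      rw [kinv_of_fixed A hall]
      exact Nat.zero_le _

lemma kinv_le_ksum (A : Fin n → ℤ) (hinj : Function.Injective A) : kinv A ≤ ksum A :=
  kinv_le_ksum_aux _ A hinj le_rfl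

lemma ksum_le_two_kinv (A : Fin n → ℤ) (hinj : Function.Injective A) :
    ksum A ≤ 2 * kinv A := ksum_le_two_kinv' A hinj

end DG

/-- For distinct arrays, `kinv ≤ ksum ≤ 2 · kinv`. -/
theorem kinv_le_ksum_le_two_kinv {n : ℕ} (A : Fin n → ℤ)
    (hinj : Function.Injective A) :
    kinv A ≤ ksum A ∧ ksum A ≤ 2 * kinv A :=
  ⟨DG.kinv_le_ksum A hinj, DG.ksum_le_two_kinv A hinj⟩
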